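/- Let ℓ ≥ 0 be an integer and let v ∈ P^ℓ(ℝ³)³ be a polynomial vector field such that curl v = 0 identically on ℝ³. Then there exists a polynomial q ∈ P^{ℓ+1}(ℝ³) such that grad q = v. (Exactness at the curl stage of the polynomial de Rham sequence: every curl-free polynomial vector field of degree at most ℓ is the gradient of a polynomial of degree at most ℓ + 1.) -/

import Mathlib

open MvPolynomial

/-- The curl of a polynomial vector field on `ℝ³`, as a polynomial vector field. -/
noncomputable def pcurl3 (w : Fin 3 → MvPolynomial (Fin 3) ℝ) : Fin 3 → MvPolynomial (Fin 3) ℝ :=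
  ![pderiv 1 (w 2) - pderiv 2 (w 1),
    pderiv 2 (w 0) - pderiv 0 (w 2),
    pderiv 0 (w 1) - pderiv 1 (w 0)]

private lemma coeff_pderiv' (j : Fin 3) (m : Fin 3 →₀ ℕ) (f : MvPolynomial (Fin 3) ℝ) :
    coeff m (pderiv j f) = ((m j : ℝ) + 1) * coeff (m + Finsupp.single j 1) f := by
  induction f using MvPolynomial.induction_on' with
  | monomial s a =>
    rw [pderiv_monomial, coeff_monomial, coeff_monomial]
    by_cases hsj : s j = 0
    · have h1 : ¬ (s = m + Finsupp.single j 1) := by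
        intro h
        have := congrArg (fun u => u j) h
        simp [hsj, Finsupp.add_apply, Finsupp.single_apply] at this
      rw [if_neg h1, mul_zero]
      split_ifs with h2
      · subst h2; simp [hsj]
      · rfl
    · by_cases h2 : s = m + Finsupp.single j 1
      · have hm : s - Finsupp.single j 1 = m := by
          rw [h2]; ext k
          rw [Finsupp.tsub_apply, Finsupp.add_apply]
          by_cases hk : k = j <;> simp [Finsupp.single_apply, hk]
        rw [if_pos hm, if_pos h2]
        have hmj : m j = s j - 1 := by
          have := congrArg (fun u => u j) h2
          simp [Finsupp.add_apply, Finsupp.single_apply] at this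
          omega
        rw [hmj]
        have : ((s j - 1 : ℕ) : ℝ) + 1 = (s j : ℝ) := by
          have h1 : (1 : ℕ) ≤ s j := Nat.one_le_iff_ne_zero.mpr hsj
          push_cast [Nat.cast_sub h1]; ring
        rw [this]; ring
      · rw [if_neg h2, mul_zero]
        split_ifs with h1
        · exfalso; apply h2
          rw [← h1,
            tsub_add_cancel_of_le (Finsupp.single_le_iff.mpr (Nat.one_le_iff_ne_zero.mpr hsj))]
        · rfl
  | add p q hp hq =>
    simp only [map_add, coeff_add, hp, hq]; ring

set_option maxHeartbeats 1000000 in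
/-- Every curl-free polynomial vector field of degree at most `ℓ` on `ℝ³`
is the gradient of a polynomial of degree at most `ℓ + 1`. -/
theorem exists_potential_of_curl_free (ℓ : ℕ) (v : Fin 3 → MvPolynomial (Fin 3) ℝ)
    (hv : ∀ i, (v i).totalDegree ≤ ℓ)
    (hcurl : ∀ (x : Fin 3 → ℝ) (i : Fin 3), eval x (pcurl3 v i) = 0) :
    ∃ q : MvPolynomial (Fin 3) ℝ, q.totalDegree ≤ ℓ + 1 ∧
      ∀ (x : Fin 3 → ℝ) (i : Fin 3), eval x (pderiv i q) = eval x (v i) := by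
  -- curl is zero as a polynomial
  have hc : ∀ i, pcurl3 v i = 0 := fun i =>
    MvPolynomial.funext (fun x => by rw [hcurl x i, map_zero])
  have h12 : pderiv 1 (v 2) = pderiv 2 (v 1) := by
    have := hc 0; simp only [pcurl3, Matrix.cons_val_zero] at this
    linear_combination (norm := abel) this
  have h20 : pderiv 2 (v 0) = pderiv 0 (v 2) := by
    have := hc 1; simp only [pcurl3, Matrix.cons_val_one, Matrix.head_cons, Matrix.cons_val_zero] at this
    linear_combination (norm := abel) this
  have h01 : pderiv 0 (v 1) = pderiv 1 (v 0) := by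
    have := hc 2
    simp only [pcurl3, Matrix.cons_val_two, Matrix.tail_cons, Matrix.head_cons] at this
    linear_combination (norm := abel) this
  have hsym : ∀ i j : Fin 3, pderiv i (v j) = pderiv j (v i) := by
    intro i j
    fin_cases i <;> fin_cases j <;>
      first
        | rfl
        | exact h12 | exact h12.symm | exact h20 | exact h20.symm
        | exact h01 | exact h01.symm
  set p : MvPolynomial (Fin 3) ℝ := ∑ i : Fin 3, X i * v i with hp
  -- key identity: ∂ⱼ p = vⱼ + ∑ᵢ Xᵢ ∂ᵢ vⱼ
  have hkey : ∀ j : Fin 3, pderiv j p = v j + ∑ i : Fin 3, X i * pderiv i (v j) := by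
    intro j
    rw [hp, map_sum]
    have : ∀ i : Fin 3, pderiv j (X i * v i)
        = (if i = j then v j else 0) + X i * pderiv i (v j) := by
      intro i
      rw [pderiv_mul, hsym j i]
      by_cases h : i = j
      · subst h; rw [pderiv_X_self, if_pos rfl, one_mul]
      · rw [pderiv_X_of_ne (by simpa using h), if_neg h, zero_mul]
    simp only [this, Finset.sum_add_distrib, Finset.sum_ite_eq' Finset.univ j,
      Finset.mem_univ, if_pos]
  -- degree of m
  set deg : (Fin 3 →₀ ℕ) → ℕ := fun m => ∑ i : Fin 3, m i with hdeg
  -- the potential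
  set q : MvPolynomial (Fin 3) ℝ :=
    ∑ m ∈ p.support, monomial m (((deg m : ℝ))⁻¹ * coeff m p) with hq
  have hcoeffq : ∀ m, coeff m q = ((deg m : ℝ))⁻¹ * coeff m p := by
    intro m
    rw [hq, coeff_sum]
    by_cases hm : m ∈ p.support
    · rw [Finset.sum_eq_single m (fun b _ hb => by rw [coeff_monomial, if_neg hb])
        (fun h => absurd hm h)]
      rw [coeff_monomial, if_pos rfl]
    · rw [Finset.sum_eq_zero, MvPolynomial.notMem_support_iff.mp hm, mul_zero]
      intro b hb
      rw [coeff_monomial, if_neg]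
      rintro rfl; exact hm hb
  -- coefficient of Euler operator
  have heuler : ∀ (m : Fin 3 →₀ ℕ) (f : MvPolynomial (Fin 3) ℝ),
      coeff m (∑ i : Fin 3, X i * pderiv i f) = (deg m : ℝ) * coeff m f := by
    intro m f
    rw [coeff_sum]
    have : ∀ i : Fin 3, coeff m (X i * pderiv i f) = (m i : ℝ) * coeff m f := by
      intro i
      classical
      rw [coeff_X_mul']
      by_cases h : i ∈ m.support
      · rw [if_pos h, coeff_pderiv']
        have hle : 1 ≤ m i := Nat.one_le_iff_ne_zero.mpr (Finsupp.mem_support_iff.mp h)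
        have h1 : m - Finsupp.single i 1 + Finsupp.single i 1 = m :=
          tsub_add_cancel_of_le (Finsupp.single_le_iff.mpr hle)
        rw [h1, Finsupp.tsub_apply, Finsupp.single_eq_same]
        push_cast [Nat.cast_sub hle]; ring
      · rw [if_neg h, Finsupp.notMem_support_iff.mp h]
        simp
    rw [Finset.sum_congr rfl fun i _ => this i, ← Finset.sum_mul, hdeg]
    push_cast
    ring
  -- the gradient identity as polynomials
  have hgrad : ∀ j : Fin 3, pderiv j q = v j := by
    intro j
    apply MvPolynomial.ext
    intro m
    rw [coeff_pderiv', hcoeffq]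
    have hdm : deg (m + Finsupp.single j 1) = deg m + 1 := by
      simp [hdeg, Finsupp.add_apply, Finsupp.single_apply, Finset.sum_add_distrib]
    have hkc : ((m j : ℝ) + 1) * coeff (m + Finsupp.single j 1) p
        = ((deg m : ℝ) + 1) * coeff m (v j) := by
      have := congrArg (coeff m) (hkey j)
      rw [coeff_pderiv', coeff_add, heuler] at this
      rw [this]; ring
    rw [mul_comm ((deg (m + Finsupp.single j 1) : ℝ))⁻¹ _, ← mul_assoc, hkc, hdm]
    have hne : ((deg m : ℝ) + 1) ≠ 0 := by positivity
    push_cast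
    field_simp
  refine ⟨q, ?_, fun x i => by rw [hgrad i]⟩
  -- degree bound
  have hpdeg : p.totalDegree ≤ ℓ + 1 := by
    refine (totalDegree_finset_sum _ _).trans (Finset.sup_le fun i _ => ?_)
    calc (X i * v i).totalDegree ≤ (X (R := ℝ) i).totalDegree + (v i).totalDegree :=
          totalDegree_mul _ _
      _ ≤ 1 + ℓ := by rw [totalDegree_X]; exact add_le_add_right (hv i) 1
      _ = ℓ + 1 := by ring
  rw [hq]
  refine (totalDegree_finset_sum _ _).trans (Finset.sup_le fun m hm => ?_)
  refine le_trans ?_ (le_trans (le_totalDegree hm) hpdeg)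
  by_cases hz : ((deg m : ℝ))⁻¹ * coeff m p = 0
  · simp [hz]
  · rw [totalDegree_monomial _ hz]
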